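/- Let (λ(n)) be a sequence of real numbers with: λ(n) ≪_ε n^ε for all ε > 0; ∑_{n≤x} λ(n) ≪_ε x^{3/5+ε}; and ∑_{n≤x} λ(n)² = cx + O_ε(x^{41/47+ε}) for some constant c > 0. Then for any r with 41/47 < r < 1 and sufficiently large x, the sequence (λ(n)) has at least one sign change for n ∈ [x, x+x^r], and the number of sign changes for n ≤ x is ≫ x^{1-r}. -/
import Mathlib


open scoped Classical

private lemma sum_sq_le_of_sign (s : Finset ℕ) (f : ℕ → ℝ) (B : ℝ)
    (hB : ∀ n ∈ s, |f n| ≤ B)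
    (hsign : (∀ n ∈ s, 0 ≤ f n) ∨ (∀ n ∈ s, f n ≤ 0)) :
    ∑ n ∈ s, f n ^ 2 ≤ B * |∑ n ∈ s, f n| := by
  rcases hsign with h | h
  · rw [abs_of_nonneg (Finset.sum_nonneg h), Finset.mul_sum]
    refine Finset.sum_le_sum fun n hn => ?_
    have h1 := hB n hn
    have h2 := h n hn
    have h3 : |f n| = f n := abs_of_nonneg h2
    nlinarith
  · rw [abs_of_nonpos (Finset.sum_nonpos h), ← Finset.sum_neg_distrib, Finset.mul_sum]
    refine Finset.sum_le_sum fun n hn => ?_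
    have h1 := hB n hn
    have h2 := h n hn
    have h3 : |f n| = -f n := abs_of_nonpos h2
    nlinarith

set_option maxHeartbeats 2000000 in
private lemma siegel_part1
    (lam : ℕ → ℝ) (r : ℝ) (hr1 : 41 / 47 < r) (hr2 : r < 1)
    (h1 : ∀ ε : ℝ, 0 < ε → ∃ C : ℝ, ∀ n : ℕ, 1 ≤ n → |lam n| ≤ C * (n : ℝ) ^ ε)
    (h2 : ∀ ε : ℝ, 0 < ε → ∃ C : ℝ, ∀ x : ℝ, 1 ≤ x →
      |∑ n ∈ Finset.Icc 1 ⌊x⌋₊, lam n| ≤ C * x ^ (3 / 5 + ε))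
    (h3 : ∃ c : ℝ, 0 < c ∧ ∀ ε : ℝ, 0 < ε → ∃ C : ℝ, ∀ x : ℝ, 1 ≤ x →
      |(∑ n ∈ Finset.Icc 1 ⌊x⌋₊, (lam n) ^ 2) - c * x| ≤ C * x ^ (41 / 47 + ε)) :
    ∃ X : ℝ, 2 ≤ X ∧ ∀ x : ℝ, X ≤ x →
      ∃ m n : ℕ, ((x : ℝ) ≤ m ∧ (m : ℝ) ≤ x + x ^ r) ∧
        ((x : ℝ) ≤ n ∧ (n : ℝ) ≤ x + x ^ r) ∧ 0 < lam m ∧ lam n < 0 := by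
  obtain ⟨c, hc, h3⟩ := h3
  have hr35 : (3:ℝ)/5 < r := by linarith
  obtain ⟨ε, hε, hβr, hγr⟩ : ∃ ε : ℝ, 0 < ε ∧ 41/47 + ε < r ∧ 3/5 + 2*ε < r := by
    refine ⟨min ((r - 41/47)/2) ((r - 3/5)/4), lt_min (by linarith) (by linarith), ?_, ?_⟩
    · have : min ((r - 41/47)/2) ((r - 3/5)/4) ≤ (r - 41/47)/2 := min_le_left _ _
      linarith
    · have : min ((r - 41/47)/2) ((r - 3/5)/4) ≤ (r - 3/5)/4 := min_le_right _ _
      linarith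
  obtain ⟨C1, hC1⟩ := h1 ε hε
  obtain ⟨C2, hC2⟩ := h2 ε hε
  obtain ⟨C3, hC3⟩ := h3 ε hε
  obtain ⟨C1', hC1'0, hC1'⟩ : ∃ C1' : ℝ, 0 ≤ C1' ∧ C1 ≤ C1' := ⟨max C1 0, le_max_right _ _, le_max_left _ _⟩
  obtain ⟨C2', hC2'0, hC2'⟩ : ∃ C2' : ℝ, 0 ≤ C2' ∧ C2 ≤ C2' := ⟨max C2 0, le_max_right _ _, le_max_left _ _⟩
  obtain ⟨C3', hC3'0, hC3'⟩ : ∃ C3' : ℝ, 0 ≤ C3' ∧ C3 ≤ C3' := ⟨max C3 0, le_max_right _ _, le_max_left _ _⟩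
  obtain ⟨β, hβdef⟩ : ∃ β : ℝ, β = 41/47 + ε := ⟨_, rfl⟩
  obtain ⟨γ, hγdef⟩ : ∃ γ : ℝ, γ = 3/5 + 2*ε := ⟨_, rfl⟩
  obtain ⟨δ, hδβ, hδγ, hδr, hδ0, hδ1⟩ :
      ∃ δ : ℝ, β ≤ δ ∧ γ ≤ δ ∧ δ < r ∧ 0 < δ ∧ δ ≤ 1 :=
    ⟨max β γ, le_max_left _ _, le_max_right _ _,
      max_lt (by rw [hβdef]; exact hβr) (by rw [hγdef]; exact hγr),
      lt_of_lt_of_le (by rw [hβdef]; linarith : (0:ℝ) < β) (le_max_left _ _),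
      le_of_lt ((max_lt (by rw [hβdef]; exact hβr) (by rw [hγdef]; exact hγr)).trans hr2)⟩
  have hβ0 : 0 < β := by rw [hβdef]; linarith
  have hγ0 : 0 < γ := by rw [hγdef]; linarith
  have hβr' : β < r := by rw [hβdef]; exact hβr
  obtain ⟨K, hKdef, hK0⟩ : ∃ K : ℝ, K = 2*C1'*C2' + 2*C3' ∧ 0 ≤ K :=
    ⟨_, rfl, by positivity⟩
  have hK0 : 0 ≤ K := by positivity
  have htend : Filter.Tendsto (fun x : ℝ => x ^ (r - δ)) Filter.atTop Filter.atTop :=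
    tendsto_rpow_atTop (by linarith)
  obtain ⟨X0, hX0⟩ := (htend.eventually_ge_atTop (2*K/c + 1)).exists_forall_of_atTop
  refine ⟨max X0 2, le_max_right _ _, fun x hx => ?_⟩
  have hx2 : (2:ℝ) ≤ x := le_trans (le_max_right _ _) hx
  have hx1 : (1:ℝ) ≤ x := by linarith
  have hx0 : (0:ℝ) < x := by linarith
  have hxX0 : x ^ (r - δ) ≥ 2*K/c + 1 := hX0 x (le_trans (le_max_left _ _) hx)
  obtain ⟨h, hhdef⟩ : ∃ h : ℝ, h = x ^ r := ⟨_, rfl⟩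
  have hh0 : 0 < h := by rw [hhdef]; exact Real.rpow_pos_of_pos hx0 r
  have hhx : h ≤ x := by
    calc h = x ^ r := hhdef
    _ ≤ x ^ (1:ℝ) := Real.rpow_le_rpow_of_exponent_le hx1 (le_of_lt hr2)
    _ = x := Real.rpow_one x
  have hxh2x : x + h ≤ 2*x := by linarith
  have hxh1 : (1:ℝ) ≤ x + h := by linarith
  have h2x1 : (1:ℝ) ≤ 2*x := by linarith
  set M : ℕ := ⌊x⌋₊ with hMdef
  set N : ℕ := ⌊x + h⌋₊ with hNdef
  have hMN : M ≤ N := Nat.floor_le_floor (by linarith)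
  have hMx : (M:ℝ) ≤ x := Nat.floor_le (by linarith)
  have hxM1 : x < (M:ℝ) + 1 := Nat.lt_floor_add_one x
  have hNx : (N:ℝ) ≤ x + h := Nat.floor_le (by linarith)
  -- bounds on members of Ioc M N
  have hmem : ∀ n ∈ Finset.Ioc M N, x ≤ (n:ℝ) ∧ (n:ℝ) ≤ x + h := by
    intro n hn
    rw [Finset.mem_Ioc] at hn
    constructor
    · have : (M:ℝ) + 1 ≤ n := by exact_mod_cast hn.1
      linarith
    · exact le_trans (by exact_mod_cast hn.2) hNx
  -- Key: constant sign on Ioc M N is impossible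
  have main : ¬ ((∀ n ∈ Finset.Ioc M N, 0 ≤ lam n) ∨ (∀ n ∈ Finset.Ioc M N, lam n ≤ 0)) := by
    intro hsign
    have hB : ∀ n ∈ Finset.Ioc M N, |lam n| ≤ C1' * (2*x) ^ ε := by
      intro n hn
      obtain ⟨hn1, hn2⟩ := hmem n hn
      have hn1' : 1 ≤ n := by
        by_contra hcon
        push_neg at hcon
        interval_cases n
        · simp at hn1; linarith
      calc |lam n| ≤ C1 * (n:ℝ) ^ ε := hC1 n hn1'
        _ ≤ C1' * (n:ℝ) ^ ε := by
            apply mul_le_mul_of_nonneg_right hC1' 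
            positivity
        _ ≤ C1' * (2*x) ^ ε := by
            apply mul_le_mul_of_nonneg_left _ hC1'0
            exact Real.rpow_le_rpow (by positivity) (by linarith) (le_of_lt hε)
    have hsq : ∑ n ∈ Finset.Ioc M N, lam n ^ 2 ≤
        (C1' * (2*x) ^ ε) * |∑ n ∈ Finset.Ioc M N, lam n| :=
      sum_sq_le_of_sign _ _ _ hB hsign
    -- interval sum identities
    have hsplit : ∀ f : ℕ → ℝ, ∑ n ∈ Finset.Ioc M N, f n =
        (∑ n ∈ Finset.Icc 1 N, f n) - (∑ n ∈ Finset.Icc 1 M, f n) := by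
      intro f
      have h0M : 0 ≤ M := Nat.zero_le M
      have := Finset.sum_Ioc_consecutive f h0M hMN
      rw [show Finset.Icc 1 N = Finset.Ioc 0 N from Finset.Icc_add_one_left_eq_Ioc 0 N,
          show Finset.Icc 1 M = Finset.Ioc 0 M from Finset.Icc_add_one_left_eq_Ioc 0 M]
      linarith
    -- upper bound on |sum lam|
    have hupper : |∑ n ∈ Finset.Ioc M N, lam n| ≤ 2 * C2' * (2*x) ^ (3/5 + ε) := by
      rw [hsplit lam]
      have b1 := hC2 (x + h) hxh1
      have b2 := hC2 x hx1
      have e1 : C2 * (x+h) ^ (3/5+ε) ≤ C2' * (2*x) ^ (3/5+ε) := by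
        calc C2 * (x+h) ^ (3/5+ε) ≤ C2' * (x+h) ^ (3/5+ε) := by
              apply mul_le_mul_of_nonneg_right hC2'; positivity
          _ ≤ C2' * (2*x) ^ (3/5+ε) := by
              apply mul_le_mul_of_nonneg_left _ hC2'0
              exact Real.rpow_le_rpow (by linarith) hxh2x (by linarith)
      have e2 : C2 * x ^ (3/5+ε) ≤ C2' * (2*x) ^ (3/5+ε) := by
        calc C2 * x ^ (3/5+ε) ≤ C2' * x ^ (3/5+ε) := by
              apply mul_le_mul_of_nonneg_right hC2'; positivity
          _ ≤ C2' * (2*x) ^ (3/5+ε) := by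
              apply mul_le_mul_of_nonneg_left _ hC2'0
              exact Real.rpow_le_rpow (by linarith) (by linarith) (by linarith)
      calc |(∑ n ∈ Finset.Icc 1 N, lam n) - (∑ n ∈ Finset.Icc 1 M, lam n)|
          ≤ |∑ n ∈ Finset.Icc 1 N, lam n| + |∑ n ∈ Finset.Icc 1 M, lam n| := abs_sub _ _
        _ ≤ C2 * (x+h) ^ (3/5+ε) + C2 * x ^ (3/5+ε) := by
            rw [hNdef, hMdef] at *
            exact add_le_add b1 b2
        _ ≤ 2 * C2' * (2*x) ^ (3/5+ε) := by linarith
    -- lower bound on sum of squares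
    have hlower : c * h - 2 * C3' * (2*x) ^ β ≤ ∑ n ∈ Finset.Ioc M N, lam n ^ 2 := by
      rw [hsplit (fun n => lam n ^ 2)]
      have b1 := hC3 (x + h) hxh1
      have b2 := hC3 x hx1
      rw [← hβdef] at b1 b2
      rw [abs_le] at b1 b2
      have e1 : C3 * (x+h) ^ β ≤ C3' * (2*x) ^ β := by
        calc C3 * (x+h) ^ β ≤ C3' * (x+h) ^ β := by
              apply mul_le_mul_of_nonneg_right hC3'; positivity
          _ ≤ C3' * (2*x) ^ β := by
              apply mul_le_mul_of_nonneg_left _ hC3'0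
              exact Real.rpow_le_rpow (by linarith) hxh2x (le_of_lt hβ0)
      have e2 : C3 * x ^ β ≤ C3' * (2*x) ^ β := by
        calc C3 * x ^ β ≤ C3' * x ^ β := by
              apply mul_le_mul_of_nonneg_right hC3'; positivity
          _ ≤ C3' * (2*x) ^ β := by
              apply mul_le_mul_of_nonneg_left _ hC3'0
              exact Real.rpow_le_rpow (by linarith) (by linarith) (le_of_lt hβ0)
      have hb1 : c * (x + h) - C3 * (x+h) ^ β ≤ ∑ n ∈ Finset.Icc 1 N, lam n ^ 2 := by
        have := b1.1; rw [hNdef]; linarith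
      have hb2 : ∑ n ∈ Finset.Icc 1 M, lam n ^ 2 ≤ c * x + C3 * x ^ β := by
        have := b2.2; rw [hMdef]; linarith
      have : c * (x + h) - c * x = c * h := by ring
      linarith
    -- combine
    have hcomb : c * h ≤ 2 * C1' * C2' * (2*x) ^ γ + 2 * C3' * (2*x) ^ β := by
      have hmul : (C1' * (2*x) ^ ε) * (2 * C2' * (2*x) ^ (3/5+ε)) = 2 * C1' * C2' * (2*x) ^ γ := by
        have hexp : (2*x) ^ γ = (2*x) ^ ε * (2*x) ^ ((3:ℝ)/5 + ε) := by
          rw [← Real.rpow_add (by linarith : (0:ℝ) < 2*x)]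
          congr 1
          rw [hγdef]; ring
        rw [hexp]; ring
      have habs0 : (0:ℝ) ≤ |∑ n ∈ Finset.Ioc M N, lam n| := abs_nonneg _
      have hBpos : (0:ℝ) ≤ C1' * (2*x) ^ ε := by positivity
      have : ∑ n ∈ Finset.Ioc M N, lam n ^ 2 ≤ 2 * C1' * C2' * (2*x) ^ γ := by
        calc ∑ n ∈ Finset.Ioc M N, lam n ^ 2
            ≤ (C1' * (2*x) ^ ε) * |∑ n ∈ Finset.Ioc M N, lam n| := hsq
          _ ≤ (C1' * (2*x) ^ ε) * (2 * C2' * (2*x) ^ (3/5+ε)) :=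
              mul_le_mul_of_nonneg_left hupper hBpos
          _ = 2 * C1' * C2' * (2*x) ^ γ := hmul
      linarith
    -- both rpow terms bounded by 2 * x ^ δ scale
    have hδbd : ∀ p, 0 < p → p ≤ δ → (2*x) ^ p ≤ 2 * x ^ δ := by
      intro p hp hpδ
      calc (2*x) ^ p ≤ (2*x) ^ δ := Real.rpow_le_rpow_of_exponent_le h2x1 hpδ
        _ = 2 ^ δ * x ^ δ := Real.mul_rpow (by norm_num) (le_of_lt hx0)
        _ ≤ 2 ^ (1:ℝ) * x ^ δ := by
            apply mul_le_mul_of_nonneg_right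
              (Real.rpow_le_rpow_of_exponent_le (by norm_num) hδ1)
            positivity
        _ = 2 * x ^ δ := by rw [Real.rpow_one]
    have hbd1 : (2*x) ^ γ ≤ 2 * x ^ δ := hδbd γ hγ0 hδγ
    have hbd2 : (2*x) ^ β ≤ 2 * x ^ δ := hδbd β hβ0 hδβ
    have hfin : c * h ≤ 2 * K * x ^ δ := by
      have t1 : 2 * C1' * C2' * (2*x) ^ γ ≤ 2 * C1' * C2' * (2 * x ^ δ) :=
        mul_le_mul_of_nonneg_left hbd1 (by positivity)
      have t2 : 2 * C3' * (2*x) ^ β ≤ 2 * C3' * (2 * x ^ δ) :=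
        mul_le_mul_of_nonneg_left hbd2 (by positivity)
      have : 2 * C1' * C2' * (2 * x ^ δ) + 2 * C3' * (2 * x ^ δ) = 2 * K * x ^ δ := by
        rw [hKdef]; ring
      linarith
    -- but c * h > 2 * K * x ^ δ
    have hxδ0 : (0:ℝ) < x ^ δ := Real.rpow_pos_of_pos hx0 δ
    have hbig : 2 * K * x ^ δ < c * h := by
      have hsplit2 : x ^ r = x ^ (r - δ) * x ^ δ := by
        rw [← Real.rpow_add hx0]; ring_nf
      have h2 : c * x ^ r = c * x ^ (r - δ) * x ^ δ := by rw [hsplit2]; ring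
      have h3 : (2*K/c + 1) * x ^ δ ≤ x ^ (r - δ) * x ^ δ :=
        mul_le_mul_of_nonneg_right hxX0 (le_of_lt hxδ0)
      have h4 : c * ((2*K/c + 1) * x ^ δ) ≤ c * (x ^ (r-δ) * x ^ δ) :=
        mul_le_mul_of_nonneg_left h3 (le_of_lt hc)
      have hcK : c * (2*K/c) = 2*K := mul_div_cancel₀ _ (ne_of_gt hc)
      have h5 : c * ((2*K/c + 1) * x ^ δ) = 2 * K * x ^ δ + c * x ^ δ := by
        have expand : c * ((2*K/c + 1) * x ^ δ) = (c * (2*K/c)) * x ^ δ + c * x ^ δ := by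
          ring
        rw [expand, hcK]
      have h6 : 0 < c * x ^ δ := by positivity
      calc 2 * K * x ^ δ < 2 * K * x ^ δ + c * x ^ δ := by linarith
        _ = c * ((2*K/c + 1) * x ^ δ) := h5.symm
        _ ≤ c * (x ^ (r-δ) * x ^ δ) := h4
        _ = c * x ^ r := by rw [← hsplit2]
        _ = c * h := by rw [hhdef]
    linarith
  -- extract positive and negative elements
  have hpos : ∃ m ∈ Finset.Ioc M N, 0 < lam m := by
    by_contra hcon
    push_neg at hcon
    exact main (Or.inr hcon)
  have hneg : ∃ n ∈ Finset.Ioc M N, lam n < 0 := by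
    by_contra hcon
    push_neg at hcon
    exact main (Or.inl hcon)
  obtain ⟨m, hm, hmpos⟩ := hpos
  obtain ⟨n, hn, hnneg⟩ := hneg
  rw [← hhdef]
  exact ⟨m, n, hmem m hm, hmem n hn, hmpos, hnneg⟩

theorem siegel_sign_changes
    (lam : ℕ → ℝ) (r : ℝ) (hr1 : 41 / 47 < r) (hr2 : r < 1)
    (h1 : ∀ ε : ℝ, 0 < ε → ∃ C : ℝ, ∀ n : ℕ, 1 ≤ n → |lam n| ≤ C * (n : ℝ) ^ ε)
    (h2 : ∀ ε : ℝ, 0 < ε → ∃ C : ℝ, ∀ x : ℝ, 1 ≤ x →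
      |∑ n ∈ Finset.Icc 1 ⌊x⌋₊, lam n| ≤ C * x ^ (3 / 5 + ε))
    (h3 : ∃ c : ℝ, 0 < c ∧ ∀ ε : ℝ, 0 < ε → ∃ C : ℝ, ∀ x : ℝ, 1 ≤ x →
      |(∑ n ∈ Finset.Icc 1 ⌊x⌋₊, (lam n) ^ 2) - c * x| ≤ C * x ^ (41 / 47 + ε)) :
    (∃ X : ℝ, ∀ x : ℝ, X ≤ x →
      ∃ m n : ℕ, ((x : ℝ) ≤ m ∧ (m : ℝ) ≤ x + x ^ r) ∧
        ((x : ℝ) ≤ n ∧ (n : ℝ) ≤ x + x ^ r) ∧ 0 < lam m ∧ lam n < 0) ∧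
    (∃ κ : ℝ, 0 < κ ∧ ∃ X : ℝ, ∀ x : ℝ, X ≤ x →
      κ * x ^ (1 - r) ≤
        (((Finset.Icc 1 ⌊x⌋₊).filter
          (fun n => ∃ m : ℕ, n < m ∧ (m : ℝ) ≤ x ∧ lam n * lam m < 0)).card : ℝ)) := by
  obtain ⟨X₁, hX₁2, hX₁⟩ := siegel_part1 lam r hr1 hr2 h1 h2 h3
  constructor
  · exact ⟨X₁, fun x hx => hX₁ x hx⟩
  · refine ⟨1/16, by norm_num, ?_⟩
    have hr0 : (0:ℝ) < r := by linarith
    have htend : Filter.Tendsto (fun x : ℝ => x ^ (1 - r)) Filter.atTop Filter.atTop :=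
      tendsto_rpow_atTop (by linarith)
    obtain ⟨X₃, hX₃⟩ := (htend.eventually_ge_atTop 8).exists_forall_of_atTop
    refine ⟨max (max (2*X₁) X₃) 4, fun x hx => ?_⟩
    have hx4 : (4:ℝ) ≤ x := le_trans (le_max_right _ _) hx
    have hx1 : (1:ℝ) ≤ x := by linarith
    have hx0 : (0:ℝ) < x := by linarith
    have hxX1 : 2*X₁ ≤ x := le_trans ((le_max_left _ _).trans (le_max_left _ _)) hx
    have hx8 : (8:ℝ) ≤ x ^ (1-r) :=
      hX₃ x (le_trans ((le_max_right _ _).trans (le_max_left _ _)) hx)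
    have hxr0 : (0:ℝ) < x ^ r := Real.rpow_pos_of_pos hx0 r
    have hxid : x ^ (1-r) * x ^ r = x := by
      rw [← Real.rpow_add hx0, show (1:ℝ) - r + r = 1 by ring, Real.rpow_one]
    set K : ℕ := ⌊x ^ (1-r) / 16⌋₊ with hKdef
    have hK16 : (K:ℝ) ≤ x ^ (1-r) / 16 := Nat.floor_le (by positivity)
    have hKb : 2*(K:ℝ) + 1 ≤ x ^ (1-r) / 4 := by linarith
    -- properties of the points t k
    have ht : ∀ k : ℕ, k ≤ K →
        X₁ ≤ x/2 + 2*(k:ℝ)*x^r ∧ x/2 + 2*(k:ℝ)*x^r + x^r ≤ x := by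
      intro k hk
      have hk' : (k:ℝ) ≤ K := Nat.cast_le.mpr hk
      have h1 : (0:ℝ) ≤ 2*(k:ℝ)*x^r := by positivity
      have h2 : (2*(k:ℝ)+1) * x^r ≤ (x^(1-r)/4) * x^r := by
        apply mul_le_mul_of_nonneg_right _ (le_of_lt hxr0)
        linarith
      have h3 : (x^(1-r)/4) * x^r = x/4 := by
        rw [div_mul_eq_mul_div, hxid]
      have h4 : (2*(k:ℝ)+1)*x^r = 2*(k:ℝ)*x^r + x^r := by ring
      constructor
      · linarith
      · linarith
    -- choose sign-change points
    have H : ∀ k : ℕ, k ≤ K → ∃ a : ℕ,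
        (x/2 + 2*(k:ℝ)*x^r ≤ (a:ℝ)) ∧ ((a:ℝ) ≤ x/2 + 2*(k:ℝ)*x^r + x^r) ∧
        (∃ m' : ℕ, a < m' ∧ ((m':ℝ) ≤ x) ∧ lam a * lam m' < 0) := by
      intro k hk
      obtain ⟨htX1, htup⟩ := ht k hk
      set t : ℝ := x/2 + 2*(k:ℝ)*x^r with htdef
      have ht0 : (0:ℝ) ≤ t := by positivity
      have htx : t ≤ x := by
        have : (0:ℝ) < x^r := hxr0
        linarith
      have htr : t ^ r ≤ x ^ r := Real.rpow_le_rpow ht0 htx (le_of_lt hr0)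
      obtain ⟨m, n, ⟨hm1, hm2⟩, ⟨hn1, hn2⟩, hmpos, hnneg⟩ := hX₁ t htX1
      have hne : m ≠ n := by
        intro hmn; rw [hmn] at hmpos; linarith
      have hmn4 : lam m * lam n < 0 := mul_neg_of_pos_of_neg hmpos hnneg
      rcases lt_or_gt_of_ne hne with hlt | hgt
      · exact ⟨m, hm1, by linarith, n, hlt, by linarith, hmn4⟩
      · exact ⟨n, hn1, by linarith, m, hgt, by linarith, by
          rw [mul_comm]; exact hmn4⟩
    choose g hg1 hg2 hg3 using H
    set f : ℕ → ℕ := fun k => if hk : k ≤ K then g k hk else 0 with hfdef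
    have hf1 : ∀ k (hk : k ≤ K), x/2 + 2*(k:ℝ)*x^r ≤ (f k : ℝ) := by
      intro k hk; simp only [hfdef, dif_pos hk]; exact hg1 k hk
    have hf2 : ∀ k (hk : k ≤ K), (f k : ℝ) ≤ x/2 + 2*(k:ℝ)*x^r + x^r := by
      intro k hk; simp only [hfdef, dif_pos hk]; exact hg2 k hk
    have hf3 : ∀ k (hk : k ≤ K), ∃ m' : ℕ, f k < m' ∧ ((m':ℝ) ≤ x) ∧
        lam (f k) * lam m' < 0 := by
      intro k hk; simp only [hfdef, dif_pos hk]; exact hg3 k hk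
    -- strict monotonicity
    have hmono : ∀ k l : ℕ, k ≤ K → l ≤ K → k < l → f k < f l := by
      intro k l hk hl hkl
      have hcast : (k:ℝ) + 1 ≤ (l:ℝ) := by exact_mod_cast Nat.succ_le_of_lt hkl
      have h1 := hf2 k hk
      have h2 := hf1 l hl
      have h3 : 2*((k:ℝ)+1)*x^r ≤ 2*(l:ℝ)*x^r := by
        apply mul_le_mul_of_nonneg_right _ (le_of_lt hxr0)
        linarith
      have h4 : 2*((k:ℝ)+1)*x^r = 2*(k:ℝ)*x^r + 2*x^r := by ring
      have : (f k : ℝ) < (f l : ℝ) := by linarith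
      exact_mod_cast this
    -- membership in the filtered set
    set S := (Finset.Icc 1 ⌊x⌋₊).filter
        (fun n => ∃ m : ℕ, n < m ∧ (m : ℝ) ≤ x ∧ lam n * lam m < 0) with hSdef
    have hmem : ∀ k ∈ Finset.range (K+1), f k ∈ S := by
      intro k hk
      rw [Finset.mem_range, Nat.lt_succ_iff] at hk
      rw [hSdef, Finset.mem_filter, Finset.mem_Icc]
      have h1 := hf1 k hk
      have h2 := (hf2 k hk).trans (ht k hk).2
      have hk0 : (0:ℝ) ≤ 2*(k:ℝ)*x^r := by positivity
      refine ⟨⟨?_, Nat.le_floor h2⟩, hf3 k hk⟩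
      have : (1:ℝ) ≤ (f k : ℝ) := by linarith
      exact_mod_cast this
    have hinj : Set.InjOn f (Finset.range (K+1)) := by
      intro k hk l hl heq
      rw [Finset.coe_range, Set.mem_Iio, Nat.lt_succ_iff] at hk hl
      by_contra hne
      rcases lt_or_gt_of_ne hne with h | h
      · exact absurd heq (Nat.ne_of_lt (hmono k l hk hl h))
      · exact absurd heq.symm (Nat.ne_of_lt (hmono l k hl hk h))
    have hcard : K + 1 ≤ S.card := by
      have := Finset.card_le_card_of_injOn f hmem hinj
      simpa using this
    have hfloor : x ^ (1-r) / 16 < (K:ℝ) + 1 := Nat.lt_floor_add_one _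
    have hcardR : ((K:ℝ) + 1) ≤ (S.card : ℝ) := by exact_mod_cast hcard
    calc 1/16 * x ^ (1-r) = x ^ (1-r) / 16 := by ring
      _ ≤ (K:ℝ) + 1 := le_of_lt hfloor
      _ ≤ (S.card : ℝ) := hcardR
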